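/- Let G be a finite subgroup of GL(V) with dim V^G = 2 and let f be a nonzero homogeneous G-invariant polynomial function on V that vanishes identically on V^G. Then the line ℙ(V^G) is contained in the singular locus of Z(f): for every nonzero v ∈ V^G, all partial derivatives of f vanish at v. -/

import Mathlib

noncomputable section
open MvPolynomial Matrix

/-- The subspace of vectors fixed by every element of a set of invertible matrices. -/
def fixedSpace {n : ℕ} (S : Set (GL (Fin n) ℂ)) : Submodule ℂ (Fin n → ℂ) where
  carrier := {v | ∀ g ∈ S, (g : Matrix (Fin n) (Fin n) ℂ).mulVec v = v}
  add_mem' := by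
    intro a b ha hb g hg
    rw [Matrix.mulVec_add, ha g hg, hb g hg]
  zero_mem' := by
    intro g hg
    simp
  smul_mem' := by
    intro c a ha g hg
    rw [Matrix.mulVec_smul, ha g hg]


lemma eval_line {n : ℕ} (v u : Fin n → ℂ) (p : MvPolynomial (Fin n) ℂ) (t : ℂ) :
    Polynomial.eval t
      (MvPolynomial.aeval
        (fun i => Polynomial.C (v i) + Polynomial.C (u i) * Polynomial.X : Fin n → Polynomial ℂ) p)
      = MvPolynomial.eval (fun i => v i + u i * t) p := by
  induction p using MvPolynomial.induction_on with
  | C a => simp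
  | add p q hp hq => simp [hp, hq]
  | mul_X p i hp => simp [hp]

lemma coeff_one_line {n : ℕ} (v u : Fin n → ℂ) (p : MvPolynomial (Fin n) ℂ) :
    (MvPolynomial.aeval
      (fun i => Polynomial.C (v i) + Polynomial.C (u i) * Polynomial.X : Fin n → Polynomial ℂ)
        p).coeff 1
      = ∑ j, u j * MvPolynomial.eval v (pderiv j p) := by
  induction p using MvPolynomial.induction_on with
  | C a => simp
  | add p q hp hq => simp [hp, hq, mul_add, Finset.sum_add_distrib]
  | mul_X p j hp =>
    have hc0 : (MvPolynomial.aeval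
        (fun i => Polynomial.C (v i) + Polynomial.C (u i) * Polynomial.X : Fin n → Polynomial ℂ)
          p).coeff 0 = MvPolynomial.eval v p := by
      have := eval_line v u p 0
      simpa [Polynomial.coeff_zero_eq_eval_zero] using this
    rw [_root_.map_mul, aeval_X]
    rw [mul_add, Polynomial.coeff_add, ← mul_assoc, Polynomial.coeff_mul_C,
      Polynomial.coeff_mul_X, Polynomial.coeff_mul_C, hp, hc0]
    classical
    have : ∀ j' : Fin n, pderiv j' (p * X j) = pderiv j' p * X j + p * pderiv j' (X j) := by
      intro j'; exact pderiv_mul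
    simp only [this]
    simp only [map_add, _root_.map_mul, eval_X]
    classical
    simp only [mul_add, Finset.sum_add_distrib]
    congr 1
    · rw [Finset.sum_mul]; exact Finset.sum_congr rfl fun x _ => by ring
    · simp [Pi.single_apply, mul_ite, mul_comm, Finset.sum_ite_eq]

theorem stmt_6 {n e : ℕ} (G : Subgroup (GL (Fin n) ℂ)) (hG : Finite G)
    (hdim : Module.finrank ℂ (fixedSpace (G : Set (GL (Fin n) ℂ))) = 2)
    (f : MvPolynomial (Fin n) ℂ) (hf0 : f ≠ 0) (hhom : f.IsHomogeneous e)
    (hinv : ∀ g ∈ G, ∀ w : Fin n → ℂ,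
      MvPolynomial.eval ((g : Matrix (Fin n) (Fin n) ℂ).mulVec w) f = MvPolynomial.eval w f)
    (hvan : ∀ w ∈ fixedSpace (G : Set (GL (Fin n) ℂ)), MvPolynomial.eval w f = 0) :
    ∀ v ∈ fixedSpace (G : Set (GL (Fin n) ℂ)), v ≠ 0 →
      ∀ i, MvPolynomial.eval v (pderiv i f) = 0 := by
  classical
  intro v hv hv0 i
  have : Fintype G := Fintype.ofFinite G
  set c : Fin n → ℂ := fun j => MvPolynomial.eval v (pderiv j f) with hc
  set L : (Fin n → ℂ) → ℂ := fun u => ∑ j, u j * c j with hL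
  set Φ : (Fin n → ℂ) → Polynomial ℂ := fun u =>
    MvPolynomial.aeval
      (fun i => Polynomial.C (v i) + Polynomial.C (u i) * Polynomial.X : Fin n → Polynomial ℂ) f
    with hPhi
  have key : ∀ u, (Φ u).coeff 1 = L u := fun u => coeff_one_line v u f
  -- the derivative along directions inside the fixed space vanishes
  have hB : ∀ u ∈ fixedSpace (G : Set (GL (Fin n) ℂ)), L u = 0 := by
    intro u hu
    rw [← key]
    have hzero : Φ u = 0 := by
      apply Polynomial.funext
      intro t
      rw [hPhi, Polynomial.eval_zero, eval_line]
      apply hvan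
      have : (fun i => v i + u i * t) = v + t • u := by
        funext j; simp [mul_comm]
      rw [this]
      exact (fixedSpace _).add_mem hv ((fixedSpace _).smul_mem t hu)
    rw [hzero]; simp
  -- G-invariance of the derivative
  have hC : ∀ g ∈ G, ∀ w : Fin n → ℂ,
      L ((g : Matrix (Fin n) (Fin n) ℂ).mulVec w) = L w := by
    intro g hg w
    rw [← key, ← key]
    refine congrArg (fun p : Polynomial ℂ => p.coeff 1) ?_
    apply Polynomial.funext
    intro t
    rw [hPhi]
    simp only [eval_line]
    have h1 : (fun i => v i + ((g : Matrix (Fin n) (Fin n) ℂ).mulVec w) i * t)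
        = (g : Matrix (Fin n) (Fin n) ℂ).mulVec (fun i => v i + w i * t) := by
      have : (fun i => v i + w i * t) = v + t • w := by funext j; simp [mul_comm]
      rw [this, Matrix.mulVec_add, Matrix.mulVec_smul, hv g hg]
      funext j; simp [mul_comm]
    rw [h1, hinv g hg]
  -- averaging over G
  have hL0 : ∀ w : Fin n → ℂ, L w = 0 := by
    intro w
    set m : ℂ := (Fintype.card G : ℂ) with hm
    have hm0 : m ≠ 0 := Nat.cast_ne_zero.2 Fintype.card_ne_zero
    set S : Fin n → ℂ := ∑ g : G, ((g : GL (Fin n) ℂ) : Matrix (Fin n) (Fin n) ℂ).mulVec w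
      with hS
    have hSmem : m⁻¹ • S ∈ fixedSpace (G : Set (GL (Fin n) ℂ)) := by
      intro h hh
      rw [Matrix.mulVec_smul]
      congr 1
      have hexp : (↑h : Matrix (Fin n) (Fin n) ℂ) *ᵥ S
          = ∑ g : G, (↑h : Matrix (Fin n) (Fin n) ℂ) *ᵥ
              (((g : GL (Fin n) ℂ) : Matrix (Fin n) (Fin n) ℂ) *ᵥ w) := by
        simp only [hS, ← Matrix.mulVecLin_apply, map_sum]
      rw [hexp, hS]
      exact Fintype.sum_equiv (Equiv.mulLeft (⟨h, hh⟩ : G)) _ _ (fun g => by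
        simp [Matrix.mulVec_mulVec])
    have hlin : L (m⁻¹ • S) = m⁻¹ * ∑ g : G,
        L (((g : GL (Fin n) ℂ) : Matrix (Fin n) (Fin n) ℂ).mulVec w) := by
      have h1 : L (m⁻¹ • S) = ∑ j, ∑ g : G,
          m⁻¹ * (((g : GL (Fin n) ℂ) : Matrix (Fin n) (Fin n) ℂ) *ᵥ w) j * c j := by
        simp only [hL]
        refine Finset.sum_congr rfl fun j _ => ?_
        simp only [Pi.smul_apply, hS, Finset.sum_apply, smul_eq_mul, Finset.mul_sum,
          Finset.sum_mul]
      rw [h1, Finset.sum_comm, Finset.mul_sum]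
      refine Finset.sum_congr rfl fun g _ => ?_
      simp only [hL, Finset.mul_sum]
      exact Finset.sum_congr rfl fun j _ => by ring
    have := hB _ hSmem
    rw [hlin] at this
    have hsum : ∑ g : G, L (((g : GL (Fin n) ℂ) : Matrix (Fin n) (Fin n) ℂ).mulVec w)
        = m * L w := by
      rw [Finset.sum_congr rfl fun (g : G) _ => hC (↑g) g.2 w]
      simp [hm, Finset.sum_const, Finset.card_univ, nsmul_eq_mul]
    rw [hsum, ← mul_assoc, inv_mul_cancel₀ hm0, one_mul] at this
    exact this
  have := hL0 (Pi.single i 1)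
  rw [hL] at this
  simpa [Pi.single_apply] using this
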